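/- A hypergroup E is a module over the Krasner hyperfield 𝕂 if and only if x + x = {0, x} for every nonzero x ∈ E. -/

import Mathlib

universe u v

/-- A (canonical) hypergroup structure on a type `M`: a commutative, associative
multivalued addition with a unique neutral element `0`, unique negatives, and
reversibility. -/
structure HypergroupOn (M : Type u) where
  add : M → M → Set M
  add_comm : ∀ a b, add a b = add b a
  add_assoc : ∀ a b c, (⋃ x ∈ add a b, add x c) = (⋃ y ∈ add b c, add a y)
  zero : M
  add_zero : ∀ a, add a zero = {a}
  zero_unique : ∀ z : M, (∀ a, add a z = {a}) → z = zero
  neg : M → M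
  zero_mem_add_neg : ∀ a, zero ∈ add a (neg a)
  neg_unique : ∀ a b, zero ∈ add a b → b = neg a
  reversible : ∀ a b c : M, a ∈ add b c → c ∈ add a (neg b)

/-- A hyperring structure: a hypergroup with a compatible commutative monoid
multiplication distributing over the hyperaddition. -/
structure HyperringOn (H : Type u) extends HypergroupOn H where
  mul : H → H → H
  mul_comm : ∀ a b, mul a b = mul b a
  mul_assoc : ∀ a b c, mul (mul a b) c = mul a (mul b c)
  one : H
  one_mul : ∀ a, mul one a = a
  zero_mul : ∀ a, mul zero a = zero
  distrib : ∀ a b c, (mul a) '' (add b c) = add (mul a b) (mul a c)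

/-- A module structure over a hyperring `R` on a type `M`. -/
structure HModuleOn {H : Type u} (R : HyperringOn H) (M : Type v)
    extends HypergroupOn M where
  smul : H → M → M
  one_smul : ∀ m, smul R.one m = m
  zero_smul : ∀ m, smul R.zero m = zero
  mul_smul : ∀ r s m, smul (R.mul r s) m = smul r (smul s m)
  smul_add : ∀ r m n, (smul r) '' (add m n) = add (smul r m) (smul r n)
  add_smul : ∀ r s m, (fun t => smul t m) '' (R.add r s) = add (smul r m) (smul s m)

/-- A submodule of a module over a hyperring: contains `0`, is closed under the
(full) hyperaddition, negation and the scalar action. -/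
structure IsHSubmodule {H : Type u} {R : HyperringOn H} {M : Type v}
    (hM : HModuleOn R M) (A : Set M) : Prop where
  zero_mem : hM.zero ∈ A
  add_mem : ∀ a ∈ A, ∀ b ∈ A, hM.add a b ⊆ A
  neg_mem : ∀ a ∈ A, hM.neg a ∈ A
  smul_mem : ∀ r : H, ∀ a ∈ A, hM.smul r a ∈ A

/-- The equivalence relation on a module `B` defined by a submodule `A`:
`x ≡ y` iff `x + A = y + A`. -/
def qsetoid {M : Type v} (G : HypergroupOn M) (A : Set M) : Setoid M where
  r x y := (⋃ a ∈ A, G.add x a) = (⋃ a ∈ A, G.add y a)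
  iseqv := ⟨fun _ => rfl, Eq.symm, Eq.trans⟩

/-- The hyperaddition induced on the quotient `B/≡`:
`[x] + [y] = {[z] | z ∈ x' + y' for some x' ≡ x, y' ≡ y}`. -/
def qadd {M : Type v} (G : HypergroupOn M) (A : Set M)
    (X Y : Quotient (qsetoid G A)) : Set (Quotient (qsetoid G A)) :=
  {Z | ∃ x y z : M, Quotient.mk (qsetoid G A) x = X ∧
      Quotient.mk (qsetoid G A) y = Y ∧ z ∈ G.add x y ∧
      Quotient.mk (qsetoid G A) z = Z}

/-- `K` is the Krasner hyperfield: the hyperring structure on `{0, 1}` (modelled on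
`Bool` with `0 = false`, `1 = true`) with `1 + 1 = {0, 1}`, `1 + 0 = {1}`,
`0 + 0 = {0}` and the usual multiplication. -/
def IsKrasnerHyperring (K : HyperringOn Bool) : Prop :=
  K.zero = false ∧ K.one = true ∧
  K.add true true = {false, true} ∧ K.add true false = {true} ∧
  K.add false false = {false}

/-- A hypergroup `E` is a module over the Krasner hyperfield `𝕂` iff
`x + x = {0, x}` for every nonzero `x ∈ E`. -/
theorem stmt17 (K : HyperringOn Bool) (hK : IsKrasnerHyperring K)
    {E : Type v} (G : HypergroupOn E) :
    (∃ m : HModuleOn K E, m.toHypergroupOn = G) ↔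
    ∀ x : E, x ≠ G.zero → G.add x x = {G.zero, x} := by
  obtain ⟨hz, ho, htt, htf, hff⟩ := hK
  constructor
  · rintro ⟨m, rfl⟩ x hx
    have h := m.add_smul true true x
    rw [htt, Set.image_pair] at h
    rw [← hz, m.zero_smul, ← ho, m.one_smul] at h
    rw [← h]
  · intro hG
    -- the hyperaddition of a hypergroup is always nonempty
    have hne : ∀ a b : E, (G.add a b).Nonempty := by
      intro a b
      have h := G.add_assoc a b (G.neg b)
      have hb : a ∈ ⋃ y ∈ G.add b (G.neg b), G.add a y := by
        refine Set.mem_biUnion (G.zero_mem_add_neg b) ?_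
        rw [G.add_zero a]; exact rfl
      rw [← h] at hb
      obtain ⟨s, ⟨x, rfl⟩, hs⟩ := hb
      obtain ⟨t, ⟨hxmem, rfl⟩, -⟩ := hs
      exact ⟨x, hxmem⟩
    have hmulf : ∀ a : Bool, K.mul false a = false := by
      intro a; rw [← hz]; exact K.zero_mul a
    have hmult : ∀ a : Bool, K.mul true a = a := by
      intro a; rw [← ho]; exact K.one_mul a
    have hft : K.add false true = {true} := by rw [K.add_comm]; exact htf
    have haddxx : ∀ x : E, G.add x x = {G.zero, x} ∨ x = G.zero := by
      intro x
      by_cases h : x = G.zero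
      · exact Or.inr h
      · exact Or.inl (hG x h)
    refine ⟨{ toHypergroupOn := G
              smul := fun r x => if r then x else G.zero
              one_smul := by intro mm; rw [ho]; rfl
              zero_smul := by intro mm; rw [hz]; rfl
              mul_smul := by
                intro r s mm
                cases r
                · simp [hmulf]
                · simp [hmult]
              smul_add := by
                intro r mm n
                cases r
                · simp only [Bool.false_eq_true, if_false]
                  rw [G.add_zero]
                  ext w
                  simp only [Set.image, Set.mem_setOf_eq, Set.mem_singleton_iff]
                  constructor
                  · rintro ⟨-, -, rfl⟩; rfl
                  · rintro rfl
                    obtain ⟨a, ha⟩ := hne mm n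
                    exact ⟨a, ha, rfl⟩
                · simp only [if_true]
                  exact Set.image_id _
              add_smul := by
                intro r s mm
                cases r <;> cases s
                · simp only [hff, Bool.false_eq_true, if_false, Set.image_singleton]
                  rw [G.add_zero]
                · simp only [hft, if_true, Bool.false_eq_true, if_false,
                    Set.image_singleton]
                  rw [G.add_comm, G.add_zero]
                · simp only [htf, if_true, Bool.false_eq_true, if_false,
                    Set.image_singleton]
                  rw [G.add_zero]
                · simp only [htt, if_true, Bool.false_eq_true, if_false,
                    Set.image_pair]
                  rcases haddxx mm with h | h
                  · rw [h]
                  · subst h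
                    rw [G.add_zero]
                    ext w
                    simp [Set.mem_insert_iff, Set.mem_singleton_iff, or_self] },
            rfl⟩
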